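/- arXiv:1811.00230 — 2 statements merged into one kernel-verified Lean document; each statement's English description precedes it below -/
import Mathlib

section
/- Let G be a finite connected, non-complete strongly regular graph on v vertices with valency k, let θ1 be the second-largest and θ2 the smallest eigenvalue of its adjacency matrix, and let t = ⌊v/2⌋. If t·k − (2t+1)·θ1 + (t+1)·θ2 ≥ 0, then h_G ≤ (k − θ1)/k. -/
open Finset Matrix

/-- `E[S,T]`: the number of ordered pairs `(x, y)` with `x ∈ S`, `y ∈ T` and `x, y` adjacent. -/
def eB {V : Type} [Fintype V] [DecidableEq V] (G : SimpleGraph V) [DecidableRel G.Adj]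
    (S T : Finset V) : ℕ :=
  ((S ×ˢ T).filter fun p => G.Adj p.1 p.2).card

/-- The Cheeger constant of a `k`-regular graph `G`: the infimum of
`E[S,Sᶜ] / (k·|S|)` over nonempty vertex subsets `S` with `2·|S| ≤ |V|`. -/
noncomputable def cheeger {V : Type} [Fintype V] [DecidableEq V] (G : SimpleGraph V)
    [DecidableRel G.Adj] (k : ℕ) : ℝ :=
  sInf {x : ℝ | ∃ S : Finset V, S.Nonempty ∧ 2 * S.card ≤ Fintype.card V ∧
    x = (eB G S Sᶜ : ℝ) / (k * S.card)}

/-- `θ` is an eigenvalue of the adjacency matrix of `G`. -/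
def IsAdjEigenvalue {V : Type} [Fintype V] [DecidableEq V] (G : SimpleGraph V)
    [DecidableRel G.Adj] (θ : ℝ) : Prop :=
  ∃ f : V → ℝ, f ≠ 0 ∧ G.adjMatrix ℝ *ᵥ f = θ • f

/-- `θ` is the second-largest adjacency eigenvalue of the connected `k`-regular graph `G`,
i.e. the largest eigenvalue distinct from the top eigenvalue `k`
(which has multiplicity one for connected graphs). -/
def IsSecondLargestAdjEigenvalue {V : Type} [Fintype V] [DecidableEq V] (G : SimpleGraph V)
    [DecidableRel G.Adj] (k : ℕ) (θ : ℝ) : Prop :=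
  IsAdjEigenvalue G θ ∧ θ ≠ (k : ℝ) ∧ ∀ μ : ℝ, IsAdjEigenvalue G μ → μ ≠ (k : ℝ) → μ ≤ θ

lemma quadform_lower {V : Type} [Fintype V] [DecidableEq V] (G : SimpleGraph V)
    [DecidableRel G.Adj] (θ2 : ℝ) (hθ2min : ∀ μ : ℝ, IsAdjEigenvalue G μ → θ2 ≤ μ)
    (x : V → ℝ) : θ2 * (x ⬝ᵥ x) ≤ x ⬝ᵥ (G.adjMatrix ℝ *ᵥ x) := by
  set A := G.adjMatrix ℝ with hAdef
  have hAh : A.IsHermitian := by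
    ext i j
    simp [Matrix.conjTranspose_apply, hAdef, SimpleGraph.adjMatrix_apply, G.adj_comm i j]
  set B : Matrix V V ℝ := A - θ2 • (1 : Matrix V V ℝ) with hBdef
  have hBh : B.IsHermitian := by
    refine hAh.sub ?_
    show (θ2 • (1 : Matrix V V ℝ))ᴴ = _
    rw [Matrix.conjTranspose_smul, Matrix.conjTranspose_one, star_trivial]
  have key : ∀ i, 0 ≤ hBh.eigenvalues i := by
    intro i
    have hv := hBh.mulVec_eigenvectorBasis i
    set f : V → ℝ := ⇑(hBh.eigenvectorBasis i) with hf
    have hf0 : f ≠ 0 := by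
      intro h
      apply (hBh.eigenvectorBasis).toBasis.ne_zero i
      simpa [hf] using congrArg (fun g => (WithLp.equiv 2 (V → ℝ)).symm g) h
    have hAf : A *ᵥ f = (hBh.eigenvalues i + θ2) • f := by
      have hB : B *ᵥ f = hBh.eigenvalues i • f := hv
      have : A *ᵥ f - θ2 • f = hBh.eigenvalues i • f := by
        rw [← hB, hBdef, Matrix.sub_mulVec, Matrix.smul_mulVec, Matrix.one_mulVec]
      have := congrArg (· + θ2 • f) this
      simpa [add_smul, sub_add_cancel] using this
    have := hθ2min _ ⟨f, hf0, hAf⟩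
    linarith
  have hpsd : B.PosSemidef := hBh.posSemidef_iff_eigenvalues_nonneg.mpr key
  have h0 := hpsd.dotProduct_mulVec_nonneg x
  rw [star_trivial] at h0
  rw [hBdef, Matrix.sub_mulVec, Matrix.smul_mulVec, Matrix.one_mulVec,
    dotProduct_sub, dotProduct_smul] at h0
  simp only [smul_eq_mul] at h0
  linarith

lemma eB_eq_sum {V : Type} [Fintype V] [DecidableEq V] (G : SimpleGraph V) [DecidableRel G.Adj]
    (S T : Finset V) : eB G S T = ∑ x ∈ S, ∑ y ∈ T, (if G.Adj x y then 1 else 0) := by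
  rw [eB, Finset.card_filter, Finset.sum_product]

lemma eB_add_compl {V : Type} [Fintype V] [DecidableEq V] (G : SimpleGraph V)
    [DecidableRel G.Adj] {k : ℕ} (hreg : G.IsRegularOfDegree k) (S : Finset V) :
    eB G S S + eB G S Sᶜ = k * S.card := by
  rw [eB_eq_sum, eB_eq_sum, ← Finset.sum_add_distrib]
  have : ∀ x ∈ S, ((∑ y ∈ S, if G.Adj x y then 1 else 0)
      + ∑ y ∈ Sᶜ, if G.Adj x y then 1 else 0) = k := by
    intro x _
    rw [Finset.sum_add_sum_compl, Finset.sum_boole]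
    rw [← SimpleGraph.neighborFinset_eq_filter, ← SimpleGraph.degree, hreg x]
    exact Nat.cast_id k
  rw [Finset.sum_congr rfl this, Finset.sum_const, smul_eq_mul, mul_comm]

set_option maxHeartbeats 1000000 in
/-- Let `G` be a finite connected non-complete strongly regular graph on `v` vertices with
valency `k`, second-largest adjacency eigenvalue `θ1`, smallest adjacency eigenvalue `θ2`,
and `t = ⌊v/2⌋`. If `t·k - (2t+1)·θ1 + (t+1)·θ2 ≥ 0`, then `h_G ≤ (k - θ1)/k`. -/
theorem stmt_9 {V : Type} [Fintype V] [DecidableEq V] (G : SimpleGraph V) [DecidableRel G.Adj]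
    (v k a1 c2 : ℕ) (hsrg : G.IsSRGWith v k a1 c2)
    (hconn : G.Connected) (hnc : G ≠ ⊤)
    (θ1 θ2 : ℝ) (hθ1 : IsSecondLargestAdjEigenvalue G k θ1)
    (hθ2e : IsAdjEigenvalue G θ2) (hθ2min : ∀ μ : ℝ, IsAdjEigenvalue G μ → θ2 ≤ μ)
    (t : ℕ) (ht : t = v / 2)
    (hineq : 0 ≤ (t : ℝ) * (k : ℝ) - (2 * (t : ℝ) + 1) * θ1 + ((t : ℝ) + 1) * θ2) :
    cheeger G k ≤ ((k : ℝ) - θ1) / (k : ℝ) := by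
  have hv : Fintype.card V = v := hsrg.card
  -- v ≥ 2
  have hV2 : 2 ≤ v := by
    by_contra h
    push_neg at h
    have hsub : Subsingleton V := by
      rw [← Fintype.card_le_one_iff_subsingleton, hv]; omega
    apply hnc
    ext x y
    have hxy : x = y := Subsingleton.elim x y
    subst hxy
    simp
  have ht1 : 1 ≤ t := by omega
  have htv : 2 * t ≤ v := by omega
  have hvt : v ≤ 2 * t + 1 := by omega
  -- k ≥ 1
  have hk1 : 0 < k := by
    obtain ⟨x, y, hxy⟩ := Fintype.exists_pair_of_one_lt_card (by omega : 1 < Fintype.card V)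
    obtain ⟨w⟩ := hconn.preconnected x y
    rw [← hsrg.regular x, SimpleGraph.degree_pos_iff_exists_adj]
    cases w with
    | nil => exact absurd rfl hxy
    | cons h p => exact ⟨_, h⟩
  -- pick S of size t
  obtain ⟨S, -, hScard⟩ := Finset.exists_subset_card_eq (s := (Finset.univ : Finset V)) (n := t) (by rw [Finset.card_univ, hv]; omega)
  have hSne : S.Nonempty := Finset.card_pos.mp (by omega)
  -- characteristic vector
  set A := G.adjMatrix ℝ with hAdef
  set χ : V → ℝ := fun x => if x ∈ S then 1 else 0 with hχ
  set o : V → ℝ := fun _ => 1 with ho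
  have hd1 : χ ⬝ᵥ χ = (t : ℝ) := by
    have : ∀ x, χ x * χ x = χ x := by
      intro x; by_cases h : x ∈ S <;> simp [hχ, h]
    rw [dotProduct]
    simp_rw [this]
    rw [hχ]
    simp only [Finset.sum_boole, Finset.filter_mem_eq_inter, Finset.univ_inter]
    rw [hScard]
  have hd2 : χ ⬝ᵥ o = (t : ℝ) := by
    rw [dotProduct, hχ, ho]
    simp only [mul_one, Finset.sum_boole, Finset.filter_mem_eq_inter, Finset.univ_inter]
    rw [hScard]
  have hd3 : o ⬝ᵥ o = (v : ℝ) := by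
    rw [dotProduct, ho]
    simp [Finset.card_univ, hv]
  have hA1 : A *ᵥ o = (k : ℝ) • o := by
    funext w
    rw [hAdef, SimpleGraph.adjMatrix_mulVec_apply]
    rw [Finset.sum_const, show (G.neighborFinset w).card = G.degree w from rfl, hsrg.regular w]
    simp [ho]
  have hAsymm : Aᵀ = A := G.isSymm_adjMatrix
  have hd4 : χ ⬝ᵥ (A *ᵥ o) = (k : ℝ) * t := by
    rw [hA1, dotProduct_smul, smul_eq_mul, hd2]
  have hd5 : o ⬝ᵥ (A *ᵥ χ) = (k : ℝ) * t := by
    rw [Matrix.dotProduct_mulVec, ← Matrix.mulVec_transpose, hAsymm, hA1,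
      smul_dotProduct, smul_eq_mul, dotProduct_comm, hd2]
  set q : ℝ := χ ⬝ᵥ (A *ᵥ χ) with hqdef
  have hqS : q = (eB G S S : ℝ) := by
    rw [hqdef, hAdef, SimpleGraph.dotProduct_mulVec_adjMatrix, eB_eq_sum]
    push_cast
    rw [← Finset.sum_subset (Finset.subset_univ S)]
    · refine Finset.sum_congr rfl fun x hx => ?_
      rw [← Finset.sum_subset (Finset.subset_univ S)]
      · refine Finset.sum_congr rfl fun y hy => ?_
        simp [hχ, hx, hy]
      · intro y _ hy
        simp [hχ, hy]
    · intro x _ hx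
      refine Finset.sum_eq_zero fun y _ => ?_
      simp [hχ, hx]
  -- the spectral bound with centered vector
  set c : ℝ := (t : ℝ) / (v : ℝ) with hc
  have hv0 : (0 : ℝ) < (v : ℝ) := by positivity
  have hcv : c * v = (t : ℝ) := div_mul_cancel₀ _ (ne_of_gt hv0)
  have hc0 : 0 ≤ c := by positivity
  set y : V → ℝ := χ - c • o with hy
  have hyAy : y ⬝ᵥ (A *ᵥ y) = q - 2 * c * (k * t) + c * c * (k * v) := by
    rw [hy, Matrix.mulVec_sub, Matrix.mulVec_smul, sub_dotProduct,
      dotProduct_sub, dotProduct_sub, smul_dotProduct,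
      dotProduct_smul, dotProduct_smul, smul_dotProduct,
      hd4, hd5, hA1]
    rw [dotProduct_smul, smul_eq_mul, hd3]
    simp only [smul_eq_mul]
    ring
  have hyy : y ⬝ᵥ y = (t : ℝ) - 2 * c * t + c * c * v := by
    rw [hy, sub_dotProduct, dotProduct_sub, dotProduct_sub,
      smul_dotProduct, dotProduct_smul, dotProduct_smul,
      smul_dotProduct, hd1, hd3, dotProduct_comm o χ, hd2]
    simp only [smul_eq_mul]
    ring
  have hQ := quadform_lower G θ2 hθ2min y
  rw [hyAy, hyy] at hQ
  -- θ1 ≥ θ2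
  have hθ12 : θ2 ≤ θ1 := hθ2min θ1 hθ1.1
  -- key parity inequality
  have hcase : (v : ℝ) = 2 * t ∨ (v : ℝ) = 2 * t + 1 := by
    have : v = 2 * t ∨ v = 2 * t + 1 := by omega
    rcases this with h | h <;> [left; right] <;> rw [h] <;> push_cast <;> ring
  have key : θ1 * v ≤ θ2 * ((v : ℝ) - t) + k * t := by
    rcases hcase with h | h <;> rw [h] <;> nlinarith [hineq, hθ12]
  -- q ≥ θ1 * t
  have hq1 : θ1 * t ≤ q := by
    have h1 : θ1 * t = c * (θ1 * v) := by rw [← hcv]; ring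
    have h2 : c * (θ1 * v) ≤ c * (θ2 * ((v : ℝ) - t) + k * t) :=
      mul_le_mul_of_nonneg_left key hc0
    have h3 : c * (θ2 * ((v : ℝ) - t) + k * t) = θ2 * ((t : ℝ) - 2*c*t + c*c*v) + 2*c*(k*t) - c*c*(k*v) := by
      linear_combination (θ2 - c * θ2 + c * k) * hcv
    linarith
  -- E(S, Sᶜ)
  have hcompl := eB_add_compl G hsrg.regular S
  rw [hScard] at hcompl
  have heBc : (eB G S Sᶜ : ℝ) = (k : ℝ) * t - q := by
    rw [hqS]
    have : (eB G S S : ℝ) + (eB G S Sᶜ : ℝ) = (k : ℝ) * t := by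
      exact_mod_cast congrArg (Nat.cast : ℕ → ℝ) hcompl
    linarith
  -- conclude via csInf_le
  have hk0 : (0 : ℝ) < (k : ℝ) := by positivity
  have ht0 : (0 : ℝ) < (t : ℝ) := by positivity
  have hmem : (eB G S Sᶜ : ℝ) / ((k : ℝ) * S.card) ∈
      {x : ℝ | ∃ S : Finset V, S.Nonempty ∧ 2 * S.card ≤ Fintype.card V ∧
        x = (eB G S Sᶜ : ℝ) / (k * S.card)} := ⟨S, hSne, by rw [hScard, hv]; omega, rfl⟩
  have hbdd : BddBelow {x : ℝ | ∃ S : Finset V, S.Nonempty ∧ 2 * S.card ≤ Fintype.card V ∧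
      x = (eB G S Sᶜ : ℝ) / (k * S.card)} := by
    refine ⟨0, fun x hx => ?_⟩
    obtain ⟨T, -, -, rfl⟩ := hx
    exact div_nonneg (Nat.cast_nonneg _) (mul_nonneg (Nat.cast_nonneg _) (Nat.cast_nonneg _))
  rw [cheeger]
  refine le_trans (csInf_le hbdd hmem) ?_
  rw [hScard]
  rw [div_le_div_iff₀ (by positivity) hk0]
  rw [heBc]
  nlinarith [hq1, hk0]
end

section
/- Let G be any finite connected, non-complete strongly regular graph with valency k, and let θ1 be the second-largest eigenvalue of its adjacency matrix. Then h_G ≤ (k − θ1)/k. -/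
open Finset Matrix

section Aux

variable {V : Type} [Fintype V] [DecidableEq V] {G : SimpleGraph V} [DecidableRel G.Adj]

lemma eB_eq_sum_s11 (S T : Finset V) :
    eB G S T = ∑ y ∈ S, (T.filter (fun z => G.Adj y z)).card := by
  unfold eB
  rw [Finset.card_filter, Finset.sum_product]
  refine Finset.sum_congr rfl fun y _ => ?_
  rw [Finset.card_filter]

lemma eB_comm (S T : Finset V) : eB G S T = eB G T S := by
  unfold eB
  apply Finset.card_bij (fun p _ => (p.2, p.1))
  · rintro ⟨a,b⟩ h
    simp only [Finset.mem_filter, Finset.mem_product] at h ⊢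
    exact ⟨⟨h.1.2, h.1.1⟩, h.2.symm⟩
  · rintro ⟨a,b⟩ _ ⟨c,d⟩ _ h
    simpa [Prod.ext_iff, and_comm] using h
  · rintro ⟨a,b⟩ h
    simp only [Finset.mem_filter, Finset.mem_product] at h
    exact ⟨(b,a), by simp [h.1.1, h.1.2, h.2.symm], rfl⟩

lemma choose_id (n p : ℕ) :
    (n+2)*(n+1)*Nat.choose n p = (p+1)*(n+1-p)*Nat.choose (n+2) (p+1) := by
  have h1 : (n+1) * Nat.choose n p = Nat.choose (n+1) (p+1) * (p+1) :=
    Nat.add_one_mul_choose_eq n p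
  have h2 : (n+2) * Nat.choose (n+1) (p+1) = Nat.choose (n+2) (p+2) * (p+2) :=
    Nat.add_one_mul_choose_eq (n+1) (p+1)
  have h3 : Nat.choose (n+2) (p+2) * (p+2) = Nat.choose (n+2) (p+1) * ((n+2) - (p+1)) :=
    Nat.choose_succ_right_eq (n+2) (p+1)
  have h4 : (n+2) - (p+1) = n+1-p := by omega
  calc (n+2)*(n+1)*Nat.choose n p = (n+2)*((n+1)*Nat.choose n p) := by ring
    _ = (n+2)*(Nat.choose (n+1) (p+1) * (p+1)) := by rw [h1]
    _ = (p+1)*((n+2) * Nat.choose (n+1) (p+1)) := by ring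
    _ = (p+1)*(Nat.choose (n+2) (p+2) * (p+2)) := by rw [h2]
    _ = (p+1)*(Nat.choose (n+2) (p+1) * (n+1-p)) := by rw [h3, h4]
    _ = (p+1)*(n+1-p)*Nat.choose (n+2) (p+1) := by ring

lemma avg_arith (vv mm k : ℕ) (h2 : 2 ≤ vv) (h1 : 1 ≤ mm) :
    (vv-1) * (k * vv * Nat.choose (vv-2) (mm-1)) ≤ Nat.choose vv mm * (k * mm * (vv - mm)) := by
  obtain ⟨n, rfl⟩ : ∃ n, vv = n + 2 := ⟨vv - 2, by omega⟩
  obtain ⟨p, rfl⟩ : ∃ p, mm = p + 1 := ⟨mm - 1, by omega⟩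
  have hc := choose_id n p
  apply le_of_eq
  have e1 : n + 2 - 1 = n + 1 := by omega
  have e2 : n + 2 - 2 = n := by omega
  have e3 : p + 1 - 1 = p := by omega
  have e4 : n + 2 - (p + 1) = n + 1 - p := by omega
  rw [e1, e2, e3, e4]
  calc (n + 1) * (k * (n+2) * Nat.choose n p)
      = k * ((n+2)*(n+1)*Nat.choose n p) := by ring
    _ = k * ((p+1)*(n+1-p)*Nat.choose (n+2) (p+1)) := by rw [hc]
    _ = Nat.choose (n+2) (p+1) * (k * (p+1) * (n+1-p)) := by ring

lemma count_sets (a b : V) (hab : a ≠ b) (m : ℕ) (hm : 1 ≤ m) :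
    (((Finset.univ : Finset V).powersetCard m).filter (fun S => a ∈ S ∧ b ∉ S)).card
      = Nat.choose (Fintype.card V - 2) (m-1) := by
  have hcard : (((Finset.univ : Finset V).erase a).erase b).card = Fintype.card V - 2 := by
    rw [Finset.card_erase_of_mem (by simp [hab.symm]), Finset.card_erase_of_mem (by simp)]
    simp [Finset.card_univ]
    omega
  rw [← hcard, ← Finset.card_powersetCard]
  apply Finset.card_bij (fun S _ => S.erase a)
  · intro S hS
    simp only [Finset.mem_filter, Finset.mem_powersetCard] at hS
    obtain ⟨⟨-, hSc⟩, haS, hbS⟩ := hS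
    rw [Finset.mem_powersetCard]
    constructor
    · intro x hx
      simp only [Finset.mem_erase] at hx ⊢
      refine ⟨?_, hx.1, Finset.mem_univ x⟩
      rintro rfl; exact hbS hx.2
    · rw [Finset.card_erase_of_mem haS, hSc]
  · intro S hS T hT h
    simp only [Finset.mem_filter, Finset.mem_powersetCard] at hS hT
    have := congrArg (insert a) h
    rwa [Finset.insert_erase hS.2.1, Finset.insert_erase hT.2.1] at this
  · intro T hT
    rw [Finset.mem_powersetCard] at hT
    refine ⟨insert a T, ?_, ?_⟩
    · have haT : a ∉ T := fun h => by
        have := hT.1 h; simp at this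
      have hbT : b ∉ T := fun h => by
        have := hT.1 h; simp [hab.symm] at this
      simp only [Finset.mem_filter, Finset.mem_powersetCard]
      refine ⟨⟨Finset.subset_univ _, ?_⟩, Finset.mem_insert_self a T, ?_⟩
      · rw [Finset.card_insert_of_notMem haT, hT.2]; omega
      · simp only [Finset.mem_insert]
        rintro (rfl | h); exact hab rfl; exact hbT h
    · rw [Finset.erase_insert]
      intro h
      have := hT.1 h; simp at this

lemma eB_as_pairs (S : Finset V) :
    eB G S Sᶜ = ∑ p ∈ ((Finset.univ ×ˢ Finset.univ : Finset (V×V)).filter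
        fun p => G.Adj p.1 p.2), (if p.1 ∈ S ∧ p.2 ∉ S then 1 else 0) := by
  have h : (S ×ˢ Sᶜ).filter (fun p : V×V => G.Adj p.1 p.2)
      = ((Finset.univ ×ˢ Finset.univ : Finset (V×V)).filter
        fun p => G.Adj p.1 p.2).filter (fun p => p.1 ∈ S ∧ p.2 ∉ S) := by
    ext ⟨x, y⟩
    simp only [Finset.mem_filter, Finset.mem_product, Finset.mem_compl, Finset.mem_univ,
      true_and]
    tauto
  rw [eB, h, Finset.card_filter]

lemma card_pairs {k : ℕ} (hreg : G.IsRegularOfDegree k) :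
    ((Finset.univ ×ˢ Finset.univ : Finset (V×V)).filter
        fun p => G.Adj p.1 p.2).card = k * Fintype.card V := by
  rw [Finset.card_filter, Finset.sum_product]
  have h : ∀ x : V, (∑ y : V, if G.Adj x y then 1 else 0) = k := by
    intro x
    rw [← Finset.card_filter]
    rw [← SimpleGraph.neighborFinset_eq_filter, SimpleGraph.card_neighborFinset_eq_degree]
    exact hreg x
  rw [Finset.sum_congr rfl (fun x _ => h x)]
  simp [Finset.card_univ, mul_comm]

lemma averaging {k : ℕ} (hreg : G.IsRegularOfDegree k) (m : ℕ) (hm : 1 ≤ m)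
    (hmv : m ≤ Fintype.card V) (hv2 : 2 ≤ Fintype.card V) :
    ∃ S : Finset V, S.card = m ∧
      (Fintype.card V - 1) * eB G S Sᶜ ≤ k * m * (Fintype.card V - m) := by
  classical
  set v := Fintype.card V with hv
  set F := (Finset.univ : Finset V).powersetCard m with hF
  set E := ((Finset.univ ×ˢ Finset.univ : Finset (V×V)).filter
        fun p => G.Adj p.1 p.2) with hE
  have hFne : F.Nonempty := by
    rw [hF, Finset.powersetCard_nonempty]
    simpa [Finset.card_univ] using hmv
  have hsum : ∑ S ∈ F, eB G S Sᶜ = k * v * Nat.choose (v-2) (m-1) := by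
    have h1 : ∀ S ∈ F, eB G S Sᶜ = ∑ p ∈ E, (if p.1 ∈ S ∧ p.2 ∉ S then 1 else 0) :=
      fun S _ => eB_as_pairs S
    rw [Finset.sum_congr rfl h1, Finset.sum_comm]
    have hfix : ∀ p ∈ E, (∑ S ∈ F, if p.1 ∈ S ∧ p.2 ∉ S then 1 else 0)
        = Nat.choose (v-2) (m-1) := by
      rintro ⟨a, b⟩ hp
      simp only [hE, Finset.mem_filter] at hp
      have hab : a ≠ b := hp.2.ne
      rw [← Finset.card_filter]
      exact count_sets a b hab m hm
    rw [Finset.sum_congr rfl hfix, Finset.sum_const, smul_eq_mul, hE,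
      card_pairs hreg]
  have hFcard : F.card = Nat.choose v m := by
    rw [hF, Finset.card_powersetCard, Finset.card_univ]
  have hkey : ∑ S ∈ F, (v-1) * eB G S Sᶜ ≤ ∑ S ∈ F, k * m * (v - m) := by
    rw [← Finset.mul_sum, hsum, Finset.sum_const, hFcard, smul_eq_mul]
    exact avg_arith v m k hv2 hm
  obtain ⟨S, hSF, hle⟩ := Finset.exists_le_of_sum_le hFne hkey
  rw [hF, Finset.mem_powersetCard] at hSF
  exact ⟨S, hSF.2, hle⟩

lemma eB_ball {v k a1 c2 : ℕ} (hsrg : G.IsSRGWith v k a1 c2) (x : V) :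
    eB G (insert x (G.neighborFinset x)) (insert x (G.neighborFinset x))ᶜ
      = k * (k - a1 - 1) := by
  classical
  set T := insert x (G.neighborFinset x) with hT
  have hxT : x ∉ G.neighborFinset x := G.notMem_neighborFinset_self x
  have hNsub : G.neighborFinset x ⊆ T := Finset.subset_insert _ _
  have hterm : ∀ y : V, (Tᶜ.filter (fun z => G.Adj y z)).card
      = G.degree y - (G.neighborFinset y ∩ T).card := by
    intro y
    have h1 : Tᶜ.filter (fun z => G.Adj y z) = G.neighborFinset y \ T := by
      ext z
      simp only [Finset.mem_filter, Finset.mem_compl, Finset.mem_sdiff,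
        SimpleGraph.mem_neighborFinset]
      tauto
    rw [h1, ← Finset.sdiff_inter_self_left,
      Finset.card_sdiff_of_subset (Finset.inter_subset_left),
      SimpleGraph.card_neighborFinset_eq_degree]
  have hcommon : ∀ y, G.Adj x y →
      (G.neighborFinset y ∩ G.neighborFinset x).card = a1 := by
    intro y hy
    have h2 := hsrg.of_adj y x hy.symm
    rw [← h2]
    rw [SimpleGraph.neighborFinset_def, SimpleGraph.neighborFinset_def,
      ← Set.toFinset_inter, ← Set.toFinset_card]
    congr!
  rw [eB_eq_sum_s11, hT, Finset.sum_insert hxT]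
  have hx0 : (Tᶜ.filter (fun z => G.Adj x z)).card = 0 := by
    rw [hterm x]
    have h3 : G.neighborFinset x ∩ T = G.neighborFinset x :=
      Finset.inter_eq_left.2 hNsub
    rw [h3, SimpleGraph.card_neighborFinset_eq_degree, Nat.sub_self]
  have hy0 : ∀ y ∈ G.neighborFinset x,
      (Tᶜ.filter (fun z => G.Adj y z)).card = k - a1 - 1 := by
    intro y hy
    rw [SimpleGraph.mem_neighborFinset] at hy
    rw [hterm y]
    have hint : G.neighborFinset y ∩ T = insert x (G.neighborFinset y ∩ G.neighborFinset x) := by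
      ext z
      simp only [hT, Finset.mem_inter, Finset.mem_insert, SimpleGraph.mem_neighborFinset]
      constructor
      · rintro ⟨hyz, rfl | hxz⟩
        · exact Or.inl rfl
        · exact Or.inr ⟨hyz, hxz⟩
      · rintro (rfl | ⟨hyz, hxz⟩)
        · exact ⟨hy.symm, Or.inl rfl⟩
        · exact ⟨hyz, Or.inr hxz⟩
    have hxnot : x ∉ G.neighborFinset y ∩ G.neighborFinset x := by
      simp only [Finset.mem_inter]
      rintro ⟨-, h2⟩
      exact hxT h2
    rw [hint, Finset.card_insert_of_notMem hxnot, hcommon y hy,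
      hsrg.regular y]
    omega
  rw [hx0, Finset.sum_congr rfl hy0, Finset.sum_const, smul_eq_mul,
    SimpleGraph.card_neighborFinset_eq_degree, hsrg.regular x]
  omega

lemma spectral {v k a1 c2 : ℕ} (hsrg : G.IsSRGWith v k a1 c2) (θ : ℝ)
    (hθ : IsAdjEigenvalue G θ) (hne : θ ≠ (k:ℝ)) :
    θ^2 = ((a1:ℝ) - c2) * θ + ((k:ℝ) - c2) := by
  classical
  obtain ⟨f, hf0, hf⟩ := hθ
  have hdeg : ∀ u : V, (Finset.univ.filter (fun x => G.Adj x u)).card = k := by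
    intro u
    have h : Finset.univ.filter (fun x => G.Adj x u) = G.neighborFinset u := by
      ext z
      simp [SimpleGraph.mem_neighborFinset, SimpleGraph.adj_comm]
    rw [h, SimpleGraph.card_neighborFinset_eq_degree]
    exact hsrg.regular u
  have hsumf : ∑ u : V, f u = 0 := by
    have h1 : ∑ x : V, (G.adjMatrix ℝ *ᵥ f) x = (k : ℝ) * ∑ u : V, f u := by
      have h : ∀ x : V, (G.adjMatrix ℝ *ᵥ f) x = ∑ u : V, if G.Adj x u then f u else 0 := by
        intro x
        rw [SimpleGraph.adjMatrix_mulVec_apply, SimpleGraph.neighborFinset_eq_filter,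
          Finset.sum_filter]
      rw [Finset.sum_congr rfl (fun x _ => h x), Finset.sum_comm]
      rw [Finset.mul_sum]
      refine Finset.sum_congr rfl fun u _ => ?_
      rw [← Finset.sum_filter, Finset.sum_const, hdeg u, nsmul_eq_mul]
    have h2 : ∑ x : V, (G.adjMatrix ℝ *ᵥ f) x = θ * ∑ u : V, f u := by
      rw [hf]
      simp [Finset.mul_sum]
    by_contra hs
    exact hne (mul_right_cancel₀ hs (by rw [← h1, ← h2])).symm
  have hcompl : ∀ x : V, ((Gᶜ).adjMatrix ℝ *ᵥ f) x = -f x - θ * f x := by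
    intro x
    rw [SimpleGraph.adjMatrix_mulVec_apply]
    have hnb : (Gᶜ).neighborFinset x = (insert x (G.neighborFinset x))ᶜ := by
      ext z
      simp only [SimpleGraph.mem_neighborFinset, SimpleGraph.compl_adj, Finset.mem_compl,
        Finset.mem_insert]
      constructor
      · rintro ⟨hxz, hn⟩ (rfl | hz)
        · exact hxz rfl
        · exact hn hz
      · intro h
        exact ⟨fun hh => h (Or.inl hh.symm), fun hh => h (Or.inr hh)⟩
    rw [hnb]
    have hsplit := Finset.sum_compl_add_sum (insert x (G.neighborFinset x)) f
    rw [Finset.sum_insert (G.notMem_neighborFinset_self x)] at hsplit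
    have hNf : ∑ u ∈ G.neighborFinset x, f u = θ * f x := by
      have h := congrFun hf x
      rw [SimpleGraph.adjMatrix_mulVec_apply] at h
      simpa using h
    rw [hNf] at hsplit
    rw [hsumf] at hsplit
    linarith
  have hmat := hsrg.matrix_eq (α := ℝ)
  have happ := congrArg (fun M => M *ᵥ f) hmat
  simp only [Matrix.add_mulVec, Matrix.smul_mulVec, Matrix.one_mulVec] at happ
  have hsq : (G.adjMatrix ℝ ^ 2) *ᵥ f = (θ^2) • f := by
    rw [pow_two, ← Matrix.mulVec_mulVec, hf, Matrix.mulVec_smul, hf, smul_smul, ← pow_two]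
  rw [hsq] at happ
  obtain ⟨x, hx⟩ := Function.ne_iff.1 hf0
  have hx2 := congrFun happ x
  simp only [Pi.add_apply, Pi.smul_apply, smul_eq_mul] at hx2
  rw [hcompl x, congrFun hf x] at hx2
  simp only [Pi.smul_apply, smul_eq_mul] at hx2
  have hx' : f x ≠ 0 := by simpa using hx
  have h2 : θ^2 * f x = (((a1:ℝ)-c2)*θ + ((k:ℝ)-c2)) * f x := by
    linear_combination hx2
  exact mul_right_cancel₀ hx' h2

lemma exists_nonadj (hnc : G ≠ ⊤) : ∃ x y : V, x ≠ y ∧ ¬G.Adj x y := by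
  by_contra h
  push_neg at h
  apply hnc
  ext x y
  simp only [SimpleGraph.top_adj]
  exact ⟨fun hh => hh.ne, fun hh => h x y hh⟩

lemma exists_p3 (hconn : G.Connected) {x y : V} (hxy : x ≠ y) (hnadj : ¬ G.Adj x y) :
    ∃ a b c : V, G.Adj a b ∧ G.Adj b c ∧ a ≠ c ∧ ¬ G.Adj a c := by
  classical
  obtain ⟨w⟩ := hconn.preconnected x y
  suffices H : ∀ n (x y : V) (w : G.Walk x y), w.length ≤ n → x ≠ y → ¬ G.Adj x y →
      ∃ a b c : V, G.Adj a b ∧ G.Adj b c ∧ a ≠ c ∧ ¬ G.Adj a c by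
    exact H w.length x y w le_rfl hxy hnadj
  clear hxy hnadj w x y
  intro n
  induction n with
  | zero =>
    intro x y w hlen hxy _
    exact absurd (SimpleGraph.Walk.eq_of_length_eq_zero (Nat.le_zero.1 hlen)) hxy
  | succ n ih =>
    intro x y w hlen hxy hnadj
    cases w with
    | nil => exact absurd rfl hxy
    | @cons _ z _ h p =>
      cases p with
      | nil => exact absurd h hnadj
      | @cons _ w' _ h2 q =>
        by_cases hxw : x = w'
        · subst hxw
          exact ih x y q (by simp [SimpleGraph.Walk.length_cons] at hlen; omega) hxy hnadj
        · by_cases haxw : G.Adj x w'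
          · exact ih x y (SimpleGraph.Walk.cons haxw q)
              (by simp [SimpleGraph.Walk.length_cons] at hlen ⊢; omega) hxy hnadj
          · exact ⟨x, z, w', h, h2, hxw, haxw⟩

lemma c2_pos {v k a1 c2 : ℕ} (hsrg : G.IsSRGWith v k a1 c2) (hconn : G.Connected)
    (hnc : G ≠ ⊤) : 1 ≤ c2 := by
  obtain ⟨x, y, hxy, hnadj⟩ := exists_nonadj hnc
  obtain ⟨a, b, c, hab, hbc, hac, hnac⟩ := exists_p3 hconn hxy hnadj
  have hb : b ∈ G.commonNeighbors a c := ⟨hab, hbc.symm⟩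
  have h := hsrg.of_not_adj hac hnac
  rw [← h]
  have : Nonempty (G.commonNeighbors a c) := ⟨⟨b, hb⟩⟩
  exact Fintype.card_pos

end Aux

set_option maxHeartbeats 4000000 in
/-- Every finite connected non-complete strongly regular graph with valency `k` and
second-largest adjacency eigenvalue `θ1` satisfies `h_G ≤ (k - θ1)/k`. -/
theorem stmt_11 {V : Type} [Fintype V] [DecidableEq V] (G : SimpleGraph V) [DecidableRel G.Adj]
    (v k a1 c2 : ℕ) (hsrg : G.IsSRGWith v k a1 c2)
    (hconn : G.Connected) (hnc : G ≠ ⊤)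
    (θ1 : ℝ) (hθ1 : IsSecondLargestAdjEigenvalue G k θ1) :
    cheeger G k ≤ ((k : ℝ) - θ1) / (k : ℝ) := by
  classical
  obtain ⟨x0, y0, hxy0, hnadj0⟩ := exists_nonadj hnc
  have hcard : Fintype.card V = v := hsrg.card
  -- an edge exists
  obtain ⟨z0, hz0⟩ : ∃ z, G.Adj x0 z := by
    obtain ⟨w⟩ := hconn.preconnected x0 y0
    cases w with
    | nil => exact absurd rfl hxy0
    | @cons _ z _ h p => exact ⟨z, h⟩
  -- k ≥ 1
  have hk1 : 1 ≤ k := by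
    have h := hsrg.regular x0
    rw [← SimpleGraph.card_neighborFinset_eq_degree] at h
    have : z0 ∈ G.neighborFinset x0 := by rwa [SimpleGraph.mem_neighborFinset]
    have := Finset.card_pos.2 ⟨z0, this⟩
    omega
  -- a1 + 1 ≤ k
  have ha1k : a1 + 1 ≤ k := by
    have h := hsrg.of_adj x0 z0 hz0
    have hsub : (G.commonNeighbors x0 z0).toFinset ⊆ (G.neighborFinset x0).erase z0 := by
      intro u hu
      rw [Set.mem_toFinset] at hu
      obtain ⟨h1, h2⟩ := hu
      rw [Finset.mem_erase, SimpleGraph.mem_neighborFinset]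
      exact ⟨fun he => G.irrefl (he ▸ h2), h1⟩
    have hle := Finset.card_le_card hsub
    rw [Set.toFinset_card, h] at hle
    rw [Finset.card_erase_of_mem (by rwa [SimpleGraph.mem_neighborFinset]),
      SimpleGraph.card_neighborFinset_eq_degree, hsrg.regular x0] at hle
    omega
  -- c2 ≤ k
  have hc2k : c2 ≤ k := by
    have h := hsrg.of_not_adj hxy0 hnadj0
    have := G.card_commonNeighbors_le_degree_left x0 y0
    rw [h, hsrg.regular x0] at this
    exact this
  have hc21 : 1 ≤ c2 := c2_pos hsrg hconn hnc
  -- v ≥ k+2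
  have hkv : k + 2 ≤ v := by
    have hsub : G.neighborFinset x0 ⊆ (Finset.univ.erase y0).erase x0 := by
      intro u hu
      rw [SimpleGraph.mem_neighborFinset] at hu
      rw [Finset.mem_erase, Finset.mem_erase]
      exact ⟨fun he => G.irrefl (he ▸ hu), fun he => hnadj0 (he ▸ hu), Finset.mem_univ u⟩
    have hle := Finset.card_le_card hsub
    rw [SimpleGraph.card_neighborFinset_eq_degree, hsrg.regular x0] at hle
    have h2 : ((Finset.univ.erase y0).erase x0).card = Fintype.card V - 2 := by
      rw [Finset.card_erase_of_mem (by simp [hxy0]), Finset.card_erase_of_mem (Finset.mem_univ _),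
        Finset.card_univ]
      omega
    omega
  -- parameter identity over ℝ
  have hidR : (k:ℝ) * ((k:ℝ) - (a1:ℝ) - 1) = ((v:ℝ) - (k:ℝ) - 1) * (c2:ℝ) := by
    have hN := SimpleGraph.IsSRGWith.param_eq G hsrg (by omega : 0 < v)
    have e1 : k - a1 - 1 = k - (a1+1) := by omega
    have e2 : v - k - 1 = v - (k+1) := by omega
    rw [e1, e2] at hN
    have hN2 := congrArg (fun t : ℕ => (t:ℝ)) hN
    push_cast [Nat.cast_sub ha1k, Nat.cast_sub (show k+1 ≤ v by omega)] at hN2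
    linarith [hN2]
  have hk0 : (0:ℝ) < k := by exact_mod_cast hk1
  have hkc2R : (c2:ℝ) ≤ (k:ℝ) := by exact_mod_cast hc2k
  have hc21R : (1:ℝ) ≤ (c2:ℝ) := by exact_mod_cast hc21
  have ha1kR : (a1:ℝ) + 1 ≤ (k:ℝ) := by exact_mod_cast ha1k
  -- spectral quantities
  have hquad := spectral hsrg θ1 hθ1.1 hθ1.2.1
  obtain ⟨e, he⟩ : ∃ e : ℝ, e = (a1:ℝ) - (c2:ℝ) := ⟨_, rfl⟩
  obtain ⟨D, hD⟩ : ∃ D : ℝ, D = e^2 + 4*((k:ℝ)-(c2:ℝ)) := ⟨_, rfl⟩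
  have hD0 : (0:ℝ) ≤ D := by rw [hD]; nlinarith [sq_nonneg e]
  have hsqrt : Real.sqrt D ^ 2 = D := Real.sq_sqrt hD0
  have hsnn : 0 ≤ Real.sqrt D := Real.sqrt_nonneg D
  obtain ⟨r, hr⟩ : ∃ r : ℝ, r = (e + Real.sqrt D)/2 := ⟨_, rfl⟩
  have hθr : θ1 ≤ r := by
    have hDsq : (2*θ1 - e)^2 = D := by rw [hD, he]; linear_combination 4*hquad
    have h1 : 2*θ1 - e ≤ Real.sqrt D := by
      calc 2*θ1 - e ≤ |2*θ1 - e| := le_abs_self _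
        _ = Real.sqrt ((2*θ1 - e)^2) := (Real.sqrt_sq_eq_abs _).symm
        _ = Real.sqrt D := by rw [hDsq]
    rw [hr]; linarith
  have hrroot : r^2 = ((a1:ℝ)-(c2:ℝ))*r + ((k:ℝ)-(c2:ℝ)) := by
    rw [hr]
    linear_combination hsqrt/4 + hD/4 + ((e + Real.sqrt D)/2) * he
  have hr0 : (0:ℝ) ≤ r := by
    have h1 : |e| ≤ Real.sqrt D := by
      rw [← Real.sqrt_sq_eq_abs]
      apply Real.sqrt_le_sqrt
      rw [hD]; nlinarith
    have h2 := neg_abs_le e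
    rw [hr]; linarith
  -- reduce to exhibiting a good set
  suffices hS : ∃ S : Finset V, S.Nonempty ∧ 2*S.card ≤ Fintype.card V ∧
      (eB G S Sᶜ : ℝ) ≤ ((k:ℝ) - r) * (S.card : ℝ) by
    obtain ⟨S, hne, hhalf, hEb⟩ := hS
    have hbdd : BddBelow {x : ℝ | ∃ S : Finset V, S.Nonempty ∧ 2 * S.card ≤ Fintype.card V ∧
        x = (eB G S Sᶜ : ℝ) / (k * S.card)} := by
      refine ⟨0, ?_⟩
      rintro x ⟨S, -, -, rfl⟩
      positivity
    have hmem : (eB G S Sᶜ : ℝ) / (k * S.card) ∈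
        {x : ℝ | ∃ S : Finset V, S.Nonempty ∧ 2 * S.card ≤ Fintype.card V ∧
        x = (eB G S Sᶜ : ℝ) / (k * S.card)} := ⟨S, hne, hhalf, rfl⟩
    refine le_trans (csInf_le hbdd hmem) ?_
    have hSc0 : (0:ℝ) < (S.card : ℝ) := by
      exact_mod_cast Finset.card_pos.2 hne
    rw [div_le_div_iff₀ (by positivity) hk0]
    have h2 : (eB G S Sᶜ : ℝ) ≤ ((k:ℝ) - θ1) * S.card := by nlinarith [hEb, hθr, hSc0]
    nlinarith [h2, hk0]
  -- the ball around x0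
  set T := insert x0 (G.neighborFinset x0) with hT
  have hTcard : T.card = k + 1 := by
    rw [hT, Finset.card_insert_of_notMem (G.notMem_neighborFinset_self x0),
      SimpleGraph.card_neighborFinset_eq_degree, hsrg.regular x0]
  have hTball : eB G T Tᶜ = k * (k - a1 - 1) := eB_ball hsrg x0
  have hEreal : ((k * (k - a1 - 1) : ℕ) : ℝ) = ((v:ℝ) - (k:ℝ) - 1) * (c2:ℝ) := by
    have e1 : k - a1 - 1 = k - (a1+1) := by omega
    rw [e1]
    push_cast [Nat.cast_sub ha1k]
    linarith [hidR]
  rcases le_or_gt v (2*k+1) with hvs | hvb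
  · -- case 1 : S = Tᶜ
    refine ⟨Tᶜ, ?_, ?_, ?_⟩
    · rw [← Finset.card_pos, Finset.card_compl, hTcard, hcard]; omega
    · rw [Finset.card_compl, hTcard, hcard]; omega
    · rw [compl_compl, eB_comm, hTball]
      have hcc : ((Tᶜ.card : ℕ) : ℝ) = (v:ℝ) - (k:ℝ) - 1 := by
        rw [Finset.card_compl, hTcard, hcard]
        push_cast [Nat.cast_sub (show k+1 ≤ v by omega)]
        ring
      rw [hEreal, hcc]
      -- need c2 ≤ k - r, i.e. r ≤ k - c2
      have hrkc : r ≤ (k:ℝ) - (c2:ℝ) := by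
        have hX0 : (0:ℝ) ≤ 2*((k:ℝ)-(c2:ℝ)) - e := by rw [he]; linarith
        have hDX : D ≤ (2*((k:ℝ)-(c2:ℝ)) - e)^2 := by
          rw [hD, he]
          nlinarith [mul_nonneg (sub_nonneg.2 hkc2R) (by linarith : (0:ℝ) ≤ (k:ℝ) - (a1:ℝ) - 1)]
        have h1 : Real.sqrt D ≤ 2*((k:ℝ)-(c2:ℝ)) - e :=
          (Real.sqrt_le_sqrt hDX).trans_eq (Real.sqrt_sq hX0)
        rw [hr]; linarith
      have hvk1 : (1:ℝ) ≤ (v:ℝ) - (k:ℝ) - 1 := by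
        have : ((k+2 : ℕ):ℝ) ≤ (v:ℝ) := by exact_mod_cast hkv
        push_cast at this; linarith
      nlinarith [hrkc, hvk1]
  · -- v ≥ 2k+2
    rcases le_or_gt r ((a1:ℝ)+1) with hra | hra
    · -- case 2a : S = T
      refine ⟨T, ?_, ?_, ?_⟩
      · exact ⟨x0, by rw [hT]; exact Finset.mem_insert_self _ _⟩
      · rw [hTcard, hcard]; omega
      · rw [hTball, hTcard]
        have e1 : k - a1 - 1 = k - (a1+1) := by omega
        rw [e1]
        push_cast [Nat.cast_sub ha1k]
        nlinarith [hra, ha1kR, hk0]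
    · -- case 2b : bisection
      set m := v / 2 with hm
      have hmfacts : k + 1 ≤ m ∧ 2*m ≤ v ∧ v ≤ 2*m + 1 ∧ m ≤ v ∧ 1 ≤ m := by omega
      obtain ⟨S, hScard, hSb⟩ := averaging hsrg.regular m (by omega)
        (by rw [hcard]; omega) (by rw [hcard]; omega)
      refine ⟨S, Finset.card_pos.1 (by omega), by rw [hScard, hcard]; omega, ?_⟩
      rw [hScard]
      -- real versions
      rw [hcard] at hSb
      have hSbR : ((v:ℝ) - 1) * (eB G S Sᶜ : ℝ) ≤ (k:ℝ) * (m:ℝ) * ((v:ℝ) - (m:ℝ)) := by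
        have hc : (((v-1) * eB G S Sᶜ : ℕ) : ℝ) ≤ ((k*m*(v-m) : ℕ) : ℝ) :=
          Nat.cast_le.mpr hSb
        push_cast [Nat.cast_sub (show 1 ≤ v by omega), Nat.cast_sub (show m ≤ v by omega)] at hc
        linarith [hc]
      obtain ⟨EE, hEE⟩ : ∃ x : ℝ, x = (eB G S Sᶜ : ℝ) := ⟨_, rfl⟩
      rw [← hEE] at hSbR ⊢
      have hmR : (k:ℝ) + 1 ≤ (m:ℝ) := by exact_mod_cast hmfacts.1
      have hvmR : (v:ℝ) ≤ 2*(m:ℝ) + 1 := by exact_mod_cast hmfacts.2.2.1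
      have hv1R : (2:ℝ)*(k:ℝ) + 2 ≤ (v:ℝ) := by exact_mod_cast hvb
      -- 2r ≤ k - 1
      have hrc : r*((c2:ℝ)+1) ≤ (k:ℝ)-(c2:ℝ) := by
        nlinarith [hrroot, mul_nonneg hr0 (show (0:ℝ) ≤ r - ((a1:ℝ)+1) by linarith)]
      have h2r : 2*r ≤ (k:ℝ) - 1 := by
        nlinarith [hrc, mul_nonneg (by linarith : (0:ℝ) ≤ (c2:ℝ)-1)
          (by linarith : (0:ℝ) ≤ (k:ℝ)+1), hc21R, hr0]
      -- r * (v-1) ≤ k * (m-1)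
      have hvm0 : (0:ℝ) ≤ (v:ℝ) - 1 := by linarith
      have hrv : r * ((v:ℝ)-1) ≤ (k:ℝ) * ((m:ℝ)-1) := by
        have p1 := mul_le_mul_of_nonneg_right h2r hvm0
        have p2 := mul_le_mul_of_nonneg_left (show (v:ℝ) - 1 ≤ 2*(m:ℝ) by linarith)
          (show (0:ℝ) ≤ (k:ℝ)-1 by linarith)
        nlinarith [p1, p2, hmR, hk0]
      -- conclude
      have hvpos : (0:ℝ) < (v:ℝ) - 1 := by linarith
      have hmpos : (0:ℝ) < (m:ℝ) := by linarith
      have p3 := mul_le_mul_of_nonneg_right hrv (le_of_lt hmpos)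
      have q1 : EE * ((v:ℝ)-1) ≤ (((k:ℝ) - r) * (m:ℝ)) * ((v:ℝ)-1) := by
        nlinarith [hSbR, p3]
      exact le_of_mul_le_mul_right q1 hvpos
end
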